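/- Let r ≥ 2 and let a with 1 ≤ a < r and gcd(a,r) = 1. Define β(r,a) = k + 2 + Σ_{i=1}^{k}(2 - b_i) - (a + a' + 2)/r, where r/a = [b_1,...,b_k] is the Hirzebruch–Jung continued fraction expansion and a' is the unique integer with 1 ≤ a' < r and a·a' ≡ 1 (mod r). Then β(r,a) + β(r,r-a) = 4(1 - 1/r). -/

import Mathlib

/-- Evaluation of a Hirzebruch–Jung continued fraction `[b₁,…,b_k]` as
`b₁ - 1/(b₂ - 1/(⋯ - 1/b_k))`. -/
def hjEval : List ℚ → ℚ
  | [] => 0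
  | b :: rest => b - 1 / hjEval rest

/-- `b` is the Hirzebruch–Jung continued fraction expansion of `r/a`. -/
def IsHJExpansion (r a : ℕ) (b : List ℤ) : Prop :=
  b ≠ [] ∧ (∀ x ∈ b, 2 ≤ x) ∧ hjEval (b.map (fun x => (x : ℚ))) = (r : ℚ) / a

/-- `β(r,a) = k + 2 + Σ (2 - bᵢ) - (a + a' + 2)/r` for an HJ expansion `b` of
`r/a` of length `k`, and `a'` the inverse of `a` mod `r`. -/
noncomputable def betaT (r a a' : ℕ) (b : List ℤ) : ℚ :=
  (b.length : ℚ) + 2 + (b.map (fun x => 2 - (x : ℚ))).sum - ((a : ℚ) + a' + 2) / r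

lemma map_cast_norm (b : List ℤ) :
    (b.map (fun x => (x : ℚ))) = b.map (fun x : ℤ => (x : ℚ)) := by
  induction b with
  | nil => rfl
  | cons x t ih => simpa using ih

lemma map_twosub_norm (b : List ℤ) :
    (b.map (fun x => 2 - (x : ℚ))) = b.map (fun x : ℤ => 2 - (x : ℚ)) := by
  induction b with
  | nil => rfl
  | cons x t ih => simpa using ih

lemma hjEval_cons (x : ℚ) (l : List ℚ) : hjEval (x :: l) = x - 1 / hjEval l := rfl

lemma one_lt_hjEval : ∀ (b : List ℤ), b ≠ [] → (∀ x ∈ b, 2 ≤ x) →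
    1 < hjEval (b.map fun x : ℤ => (x : ℚ))
  | [], h, _ => absurd rfl h
  | x :: rest, _, h2 => by
    have hx : (2 : ℚ) ≤ (x : ℚ) := by exact_mod_cast h2 x (by simp)
    rw [List.map_cons, hjEval_cons]
    rcases eq_or_ne rest [] with h | h
    · subst h
      simp only [List.map_nil]
      show 1 < (x : ℚ) - 1 / hjEval []
      rw [show hjEval [] = 0 from rfl]
      simp; linarith
    · have ih := one_lt_hjEval rest h (fun y hy => h2 y (List.mem_cons_of_mem _ hy))
      have hpos : 0 < hjEval (rest.map fun x : ℤ => (x : ℚ)) := by linarith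
      have h1 : 1 / hjEval (rest.map fun x : ℤ => (x : ℚ)) < 1 := by
        rw [div_lt_one hpos]; exact ih
      have h0 : 0 < 1 / hjEval (rest.map fun x : ℤ => (x : ℚ)) := by positivity
      linarith

lemma hj_of_two (b : List ℤ) (hne : b ≠ []) (h2 : ∀ x ∈ b, 2 ≤ x)
    (hv : hjEval (b.map fun x : ℤ => (x : ℚ)) = 2) : b = [2] := by
  obtain ⟨x, rest, rfl⟩ := List.exists_cons_of_ne_nil hne
  rw [List.map_cons, hjEval_cons] at hv
  rcases eq_or_ne rest [] with h | h
  · subst h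
    rw [show hjEval (List.map _ []) = 0 from rfl] at hv
    simp at hv
    have : x = 2 := by exact_mod_cast hv
    rw [this]
  · exfalso
    have ih := one_lt_hjEval rest h (fun y hy => h2 y (List.mem_cons_of_mem _ hy))
    have hpos : 0 < hjEval (rest.map fun x : ℤ => (x : ℚ)) := by linarith
    have h1 : 1 / hjEval (rest.map fun x : ℤ => (x : ℚ)) < 1 := by
      rw [div_lt_one hpos]; exact ih
    have h0 : 0 < 1 / hjEval (rest.map fun x : ℤ => (x : ℚ)) := by positivity
    have hx : (2 : ℚ) ≤ (x : ℚ) := by exact_mod_cast h2 x (by simp)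
    have hlt : (2 : ℚ) < (x : ℚ) := by linarith
    have hlt3 : (x : ℚ) < 3 := by linarith
    have : (2 : ℤ) < x := by exact_mod_cast hlt
    have : x < 3 := by exact_mod_cast hlt3
    omega

/-- The key inductive step: if `2a < r`, the identity for `(r, a)` follows from
the identity for `(r - a, a)`. -/
lemma hj_step (r a : ℕ) (ha : 1 ≤ a) (h2a : 2 * a < r)
    (IH : ∀ b' c' : List ℤ, IsHJExpansion (r - a) a b' →
      IsHJExpansion (r - a) ((r - a) - a) c' →
      (b'.sum + c'.sum : ℤ) = 3 * (b'.length + c'.length) - 2)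
    (b c : List ℤ) (hb : IsHJExpansion r a b) (hc : IsHJExpansion r (r - a) c) :
    (b.sum + c.sum : ℤ) = 3 * (b.length + c.length) - 2 := by
  obtain ⟨hbne, hb2, hbv⟩ := hb
  obtain ⟨hcne, hc2, hcv⟩ := hc
  rw [map_cast_norm] at hbv hcv
  have haQ : (0 : ℚ) < (a : ℚ) := by exact_mod_cast ha
  have hrQ : (0 : ℚ) < (r : ℚ) := by exact_mod_cast (show 0 < r by omega)
  have hraN : a ≤ r := by omega
  have hraQ : ((r - a : ℕ) : ℚ) = (r : ℚ) - (a : ℚ) := by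
    push_cast [Nat.cast_sub hraN]; ring
  have hra0 : (0 : ℚ) < (r : ℚ) - (a : ℚ) := by
    have : (2 * a : ℚ) < r := by exact_mod_cast h2a
    linarith
  have hr2a : (0 : ℚ) < (r : ℚ) - 2 * (a : ℚ) := by
    have : (2 * a : ℚ) < r := by exact_mod_cast h2a
    push_cast at this ⊢; linarith
  -- r/a > 2
  have hval2 : (2 : ℚ) < (r : ℚ) / (a : ℚ) := by
    rw [lt_div_iff₀ haQ]
    have : (2 * a : ℚ) < r := by exact_mod_cast h2a
    linarith
  obtain ⟨b1, tb, rfl⟩ := List.exists_cons_of_ne_nil hbne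
  rw [List.map_cons, hjEval_cons] at hbv
  set e := hjEval (tb.map fun x : ℤ => (x : ℚ)) with he
  -- b1 ≥ 3
  have hb1 : 3 ≤ b1 := by
    have hinv : 0 ≤ 1 / e := by
      rcases eq_or_ne tb [] with h | h
      · subst h; simp [he, hjEval]
      · have := one_lt_hjEval tb h (fun y hy => hb2 y (List.mem_cons_of_mem _ hy))
        positivity
    have h2b : (2 : ℚ) < (b1 : ℚ) := by linarith
    have : (2 : ℤ) < b1 := by exact_mod_cast h2b
    omega
  -- b' is an expansion of (r-a)/a
  have hb' : IsHJExpansion (r - a) a ((b1 - 1) :: tb) := by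
    refine ⟨by simp, ?_, ?_⟩
    · intro x hx
      rcases List.mem_cons.mp hx with h | h
      · omega
      · exact hb2 x (List.mem_cons_of_mem _ h)
    · rw [map_cast_norm, List.map_cons, hjEval_cons, hraQ]
      push_cast
      rw [← he, sub_right_comm, hbv]
      field_simp
  -- c side: 1 < r/(r-a) < 2
  have hcval1 : (1 : ℚ) < (r : ℚ) / ((r : ℚ) - a) := by
    rw [lt_div_iff₀ hra0]; linarith
  have hcval2 : (r : ℚ) / ((r : ℚ) - a) < 2 := by
    rw [div_lt_iff₀ hra0]
    have : (2 * a : ℚ) < r := by exact_mod_cast h2a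
    linarith
  rw [hraQ] at hcv
  obtain ⟨c1, tc, rfl⟩ := List.exists_cons_of_ne_nil hcne
  rw [List.map_cons, hjEval_cons] at hcv
  set e' := hjEval (tc.map fun x : ℤ => (x : ℚ)) with he'
  have hc1ge : (2 : ℚ) ≤ (c1 : ℚ) := by exact_mod_cast hc2 c1 (by simp)
  have htc : tc ≠ [] := by
    intro h
    subst h
    have h0 : e' = 0 := by simp [he', hjEval]
    rw [h0] at hcv
    norm_num at hcv
    linarith
  have he'1 : 1 < e' := one_lt_hjEval tc htc (fun y hy => hc2 y (List.mem_cons_of_mem _ hy))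
  have he'pos : 0 < e' := by linarith
  have hinv1 : 1 / e' < 1 := by rw [div_lt_one he'pos]; exact he'1
  have hinv0 : 0 < 1 / e' := by positivity
  have hc1eq : c1 = 2 := by
    have hlt : (c1 : ℚ) < 3 := by linarith
    have : (c1 : ℤ) < 3 := by exact_mod_cast hlt
    have : (2 : ℤ) ≤ c1 := hc2 c1 (by simp)
    omega
  subst hc1eq
  -- tc is an expansion of (r - a)/(r - 2a)
  have htcval : e' = ((r : ℚ) - a) / ((r : ℚ) - 2 * a) := by
    have h1 : 1 / e' = ((r : ℚ) - 2 * a) / ((r : ℚ) - a) := by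
      push_cast at hcv
      field_simp at hcv ⊢
      linarith
    field_simp at h1
    field_simp
    rw [eq_div_iff (ne_of_gt (by linarith))]; linear_combination -h1
  have hc' : IsHJExpansion (r - a) ((r - a) - a) tc := by
    refine ⟨htc, fun y hy => hc2 y (List.mem_cons_of_mem _ hy), ?_⟩
    have h1 : ((r - a : ℕ) : ℚ) = (r : ℚ) - a := hraQ
    have h2 : (((r - a) - a : ℕ) : ℚ) = (r : ℚ) - 2 * a := by
      have : (r - a) - a = r - 2 * a := by omega
      rw [this, Nat.cast_sub (by omega)]
      push_cast; ring
    rw [map_cast_norm, ← he', htcval, h1, h2]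
  have key := IH _ _ hb' hc'
  simp only [List.sum_cons, List.length_cons] at key ⊢
  push_cast at key ⊢
  linarith

lemma coprime_aux {a r : ℕ} (ha : 1 ≤ a) (h2a : 2 * a < r) (hcop : Nat.Coprime a r) :
    Nat.Coprime a (r - a) := by
  have := (Nat.coprime_sub_self_right (m := a) (n := r) (by omega)).mpr hcop
  exact this

/-- The classical identity `Σbᵢ + Σcⱼ = 3(k + l) - 2` for dual HJ expansions. -/
lemma hj_sum_identity : ∀ r : ℕ, ∀ a : ℕ, 1 ≤ a → a < r → Nat.Coprime a r →
    ∀ b c : List ℤ, IsHJExpansion r a b → IsHJExpansion r (r - a) c →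
    (b.sum + c.sum : ℤ) = 3 * (b.length + c.length) - 2 := by
  intro r
  induction r using Nat.strong_induction_on with
  | _ r IH =>
    intro a ha har hcop b c hb hc
    rcases lt_trichotomy (2 * a) r with h | h | h
    · -- 2a < r : use the step lemma
      refine hj_step r a ha h ?_ b c hb hc
      intro b' c' hb' hc'
      exact IH (r - a) (by omega) a ha (by omega) (coprime_aux ha h hcop) b' c' hb' hc'
    · -- 2a = r : then a = 1, r = 2
      have hdvd : a ∣ r := ⟨2, by omega⟩
      have ha1 : a = 1 := Nat.Coprime.eq_one_of_dvd hcop hdvd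
      have hr2 : r = 2 := by omega
      subst ha1; subst hr2
      obtain ⟨hbne, hb2, hbv⟩ := hb
      obtain ⟨hcne, hc2, hcv⟩ := hc
      rw [map_cast_norm] at hbv hcv
      norm_num at hbv hcv
      obtain rfl := hj_of_two b hbne hb2 hbv
      obtain rfl := hj_of_two c hcne hc2 hcv
      simp
    · -- 2a > r : apply the step lemma to the swapped pair
      have hra : r - (r - a) = a := by omega
      have key := hj_step r (r - a) (by omega) (by omega) ?_ c b hc (by rw [hra]; exact hb)
      · linarith [key]
      · intro b' c' hb' hc'
        rw [hra] at hb' hc'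
        exact IH a (by omega) (r - a) (by omega) (by omega)
          ((Nat.coprime_sub_self_left har.le).mpr hcop.symm) b' c' hb' hc'

lemma inv_sum {r a a' a'' : ℕ} (hr : 2 ≤ r) (ha : 1 ≤ a) (har : a < r)
    (hcop : Nat.Coprime a r)
    (ha'1 : 1 ≤ a') (ha'r : a' < r) (ha' : a * a' ≡ 1 [MOD r])
    (ha''1 : 1 ≤ a'') (ha''r : a'' < r) (ha'' : (r - a) * a'' ≡ 1 [MOD r]) :
    a' + a'' = r := by
  have h1 : ((a * a' : ℕ) : ZMod r) = ((1 : ℕ) : ZMod r) :=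
    (ZMod.natCast_eq_natCast_iff _ _ _).mpr ha'
  have h2 : (((r - a) * a'' : ℕ) : ZMod r) = ((1 : ℕ) : ZMod r) :=
    (ZMod.natCast_eq_natCast_iff _ _ _).mpr ha''
  push_cast [Nat.cast_sub har.le] at h1 h2
  rw [ZMod.natCast_self] at h2
  have h3 : (a : ZMod r) * ((a' : ZMod r) + (a'' : ZMod r)) = 0 := by
    linear_combination h1 - h2
  have hu : IsUnit (a : ZMod r) := by
    rw [ZMod.isUnit_iff_coprime]
    exact hcop
  have h4 : ((a' + a'' : ℕ) : ZMod r) = 0 := by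
    push_cast
    exact hu.mul_left_cancel (by rw [h3, mul_zero])
  have h5 : r ∣ a' + a'' := (ZMod.natCast_eq_zero_iff _ _).mp h4
  obtain ⟨k, hk⟩ := h5
  have hk1 : 1 ≤ k := by nlinarith
  have hk2 : k < 2 := by nlinarith
  have hk3 : k = 1 := by omega
  rw [hk3, mul_one] at hk
  omega

lemma sum_two_sub : ∀ b : List ℤ, (b.map fun x : ℤ => 2 - (x : ℚ)).sum
    = 2 * (b.length : ℚ) - ((b.sum : ℤ) : ℚ)
  | [] => by simp
  | x :: rest => by
    simp only [List.map_cons, List.sum_cons, List.length_cons, sum_two_sub rest]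
    push_cast
    ring

theorem beta_pair_identity (r a : ℕ) (hr : 2 ≤ r) (ha : 1 ≤ a) (har : a < r)
    (hcop : Nat.Coprime a r)
    (a' : ℕ) (ha'1 : 1 ≤ a') (ha'r : a' < r) (ha' : a * a' ≡ 1 [MOD r])
    (a'' : ℕ) (ha''1 : 1 ≤ a'') (ha''r : a'' < r) (ha'' : (r - a) * a'' ≡ 1 [MOD r])
    (b c : List ℤ) (hb : IsHJExpansion r a b) (hc : IsHJExpansion r (r - a) c) :
    betaT r a a' b + betaT r (r - a) a'' c = 4 * (1 - 1 / (r : ℚ)) := by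
  have hsum := hj_sum_identity r a ha har hcop b c hb hc
  have hinv := inv_sum hr ha har hcop ha'1 ha'r ha' ha''1 ha''r ha''
  have hrQ : (r : ℚ) ≠ 0 := by positivity
  have hsumQ : (b.sum : ℚ) + (c.sum : ℚ) = 3 * ((b.length : ℚ) + c.length) - 2 := by
    exact_mod_cast hsum
  have hinvQ : (a' : ℚ) + (a'' : ℚ) = r := by exact_mod_cast hinv
  have hraQ : ((r - a : ℕ) : ℚ) = (r : ℚ) - a := by
    rw [Nat.cast_sub har.le]
  unfold betaT
  rw [map_twosub_norm, map_twosub_norm, sum_two_sub, sum_two_sub, hraQ]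
  field_simp
  have h1 : ((b.sum : ℚ) + (c.sum : ℚ)) * r = (3 * ((b.length : ℚ) + c.length) - 2) * r := by
    rw [hsumQ]
  push_cast at h1 ⊢
  ring_nf at h1 hinvQ ⊢
  linarith [h1, hinvQ]
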